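/- arXiv:0706.3595 — 2 statements merged into one kernel-verified Lean document; each statement's English description precedes it below -/
import Mathlib

section
/- The function ψ₂(x,y) = (2x + 2y + 3x² + 10xy − 3y²)/Q(x,y), with Q as above, satisfies (−Δ + u)ψ₂ = 0 on ℝ², where u = −5120(1 + 8x + 2y + 17x² + 17y²)/Q². -/
/-- Partial derivative in the first coordinate. -/
noncomputable def pdx (f : ℝ × ℝ → ℝ) : ℝ × ℝ → ℝ :=
  fun p => deriv (fun t => f (t, p.2)) p.1

/-- Partial derivative in the second coordinate. -/
noncomputable def pdy (f : ℝ × ℝ → ℝ) : ℝ × ℝ → ℝ :=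
  fun p => deriv (fun t => f (p.1, t)) p.2

/-- Laplacian on ℝ². -/
noncomputable def lap (f : ℝ × ℝ → ℝ) : ℝ × ℝ → ℝ :=
  fun p => pdx (pdx f) p + pdy (pdy f) p

/-- The denominator polynomial Q from Example 1. -/
noncomputable def Qpoly (p : ℝ × ℝ) : ℝ :=
  160 + 4 * p.1 ^ 2 + 4 * p.2 ^ 2 + 16 * p.1 ^ 3 + 4 * p.1 ^ 2 * p.2
    + 16 * p.1 * p.2 ^ 2 + 4 * p.2 ^ 3 + 17 * (p.1 ^ 2 + p.2 ^ 2) ^ 2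

/-- The potential u from Example 1. -/
noncomputable def upot (p : ℝ × ℝ) : ℝ :=
  -5120 * (1 + 8 * p.1 + 2 * p.2 + 17 * p.1 ^ 2 + 17 * p.2 ^ 2) / (Qpoly p) ^ 2

/-- The eigenfunction ψ₁ from Example 1. -/
noncomputable def psi1 (p : ℝ × ℝ) : ℝ :=
  (p.1 + 2 * p.1 ^ 2 + p.1 * p.2 - 2 * p.2 ^ 2) / Qpoly p

/-- The eigenfunction ψ₂ from Example 1. -/
noncomputable def psi2 (p : ℝ × ℝ) : ℝ :=
  (2 * p.1 + 2 * p.2 + 3 * p.1 ^ 2 + 10 * p.1 * p.2 - 3 * p.2 ^ 2) / Qpoly p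

/- Auxiliary machinery -/

lemma hasDerivAt_congr' {f g : ℝ → ℝ} {d e x : ℝ} (h : HasDerivAt f d x)
    (h1 : ∀ t, f t = g t) (h2 : d = e) : HasDerivAt g e x := by
  subst h2; exact (funext h1 : f = g) ▸ h

lemma hasDerivAt_poly4 (a0 a1 a2 a3 a4 x : ℝ) :
    HasDerivAt (fun t : ℝ => a0 + a1 * t + a2 * t ^ 2 + a3 * t ^ 3 + a4 * t ^ 4)
      (a1 + 2 * a2 * x + 3 * a3 * x ^ 2 + 4 * a4 * x ^ 3) x := by
  have h0 := hasDerivAt_const x a0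
  have h1 := (hasDerivAt_id x).const_mul a1
  have h2 := (hasDerivAt_pow 2 x).const_mul a2
  have h3 := (hasDerivAt_pow 3 x).const_mul a3
  have h4 := (hasDerivAt_pow 4 x).const_mul a4
  exact hasDerivAt_congr' ((((h0.add h1).add h2).add h3).add h4)
    (fun t => by simp only [id_eq, Pi.add_apply]) (by push_cast; ring)

lemma Qpos (x y : ℝ) : 0 < Qpoly (x, y) := by
  simp only [Qpoly]
  nlinarith [sq_nonneg (x+y), sq_nonneg (x-y), sq_nonneg (x^2+y^2), sq_nonneg (4*x^2+2*x),
    sq_nonneg (4*y^2+y), sq_nonneg (x*y), sq_nonneg x, sq_nonneg y, sq_nonneg (x^2-1),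
    sq_nonneg (y^2-1), sq_nonneg (x*y+x), sq_nonneg (x*y+y)]

noncomputable def Nf (x y : ℝ) : ℝ := 2*x + 2*y + 3*x^2 + 10*x*y - 3*y^2
noncomputable def NXd (x y : ℝ) : ℝ := 2 + 10*y + 6*x
noncomputable def NYd (x y : ℝ) : ℝ := 2 + 10*x - 6*y
noncomputable def QXd (x y : ℝ) : ℝ := 16*y^2 + (8 + 8*y + 68*y^2)*x + 48*x^2 + 68*x^3
noncomputable def QYd (x y : ℝ) : ℝ := 4*x^2 + (8 + 32*x + 68*x^2)*y + 12*y^2 + 68*y^3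
noncomputable def QXXd (x y : ℝ) : ℝ := 8 + 8*y + 68*y^2 + 96*x + 204*x^2
noncomputable def QYYd (x y : ℝ) : ℝ := 8 + 32*x + 68*x^2 + 24*y + 204*y^2

noncomputable def DX (x y : ℝ) : ℝ :=
  (NXd x y * Qpoly (x, y) - Nf x y * QXd x y) / (Qpoly (x, y)) ^ 2
noncomputable def DY (x y : ℝ) : ℝ :=
  (NYd x y * Qpoly (x, y) - Nf x y * QYd x y) / (Qpoly (x, y)) ^ 2

noncomputable def DXX (x y : ℝ) : ℝ :=
  ((6 * Qpoly (x,y) + NXd x y * QXd x y - (NXd x y * QXd x y + Nf x y * QXXd x y))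
      * Qpoly (x,y) ^ 2
    - (NXd x y * Qpoly (x,y) - Nf x y * QXd x y) * (2 * Qpoly (x,y) * QXd x y))
    / Qpoly (x,y) ^ 4
noncomputable def DYY (x y : ℝ) : ℝ :=
  ((-6 * Qpoly (x,y) + NYd x y * QYd x y - (NYd x y * QYd x y + Nf x y * QYYd x y))
      * Qpoly (x,y) ^ 2
    - (NYd x y * Qpoly (x,y) - Nf x y * QYd x y) * (2 * Qpoly (x,y) * QYd x y))
    / Qpoly (x,y) ^ 4

lemma hQX (x y : ℝ) : HasDerivAt (fun t => Qpoly (t, y)) (QXd x y) x := by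
  exact hasDerivAt_congr'
    (hasDerivAt_poly4 (160 + 4*y^2 + 4*y^3 + 17*y^4) (16*y^2) (4 + 4*y + 34*y^2) 16 17 x)
    (fun t => by simp only [Qpoly]; ring) (by simp only [QXd]; ring)

lemma hQY (x y : ℝ) : HasDerivAt (fun t => Qpoly (x, t)) (QYd x y) y := by
  exact hasDerivAt_congr'
    (hasDerivAt_poly4 (160 + 4*x^2 + 16*x^3 + 17*x^4) (4*x^2) (4 + 16*x + 34*x^2) 4 17 y)
    (fun t => by simp only [Qpoly]; ring) (by simp only [QYd]; ring)

lemma hNX (x y : ℝ) : HasDerivAt (fun t => Nf t y) (NXd x y) x := by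
  exact hasDerivAt_congr' (hasDerivAt_poly4 (2*y - 3*y^2) (2 + 10*y) 3 0 0 x)
    (fun t => by simp only [Nf]; ring) (by simp only [NXd]; ring)

lemma hNY (x y : ℝ) : HasDerivAt (fun t => Nf x t) (NYd x y) y := by
  exact hasDerivAt_congr' (hasDerivAt_poly4 (2*x + 3*x^2) (2 + 10*x) (-3) 0 0 y)
    (fun t => by simp only [Nf]; ring) (by simp only [NYd]; ring)

lemma hNXd (x y : ℝ) : HasDerivAt (fun t => NXd t y) 6 x := by
  exact hasDerivAt_congr' (hasDerivAt_poly4 (2 + 10*y) 6 0 0 0 x)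
    (fun t => by simp only [NXd]; ring) (by ring)

lemma hNYd (x y : ℝ) : HasDerivAt (fun t => NYd x t) (-6) y := by
  exact hasDerivAt_congr' (hasDerivAt_poly4 (2 + 10*x) (-6) 0 0 0 y)
    (fun t => by simp only [NYd]; ring) (by ring)

lemma hQXd (x y : ℝ) : HasDerivAt (fun t => QXd t y) (QXXd x y) x := by
  exact hasDerivAt_congr' (hasDerivAt_poly4 (16*y^2) (8 + 8*y + 68*y^2) 48 68 0 x)
    (fun t => by simp only [QXd]; ring) (by simp only [QXXd]; ring)

lemma hQYd (x y : ℝ) : HasDerivAt (fun t => QYd x t) (QYYd x y) y := by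
  exact hasDerivAt_congr' (hasDerivAt_poly4 (4*x^2) (8 + 32*x + 68*x^2) 12 68 0 y)
    (fun t => by simp only [QYd]; ring) (by simp only [QYYd]; ring)

lemma hpsiX (x y : ℝ) : HasDerivAt (fun t => psi2 (t, y)) (DX x y) x := by
  exact hasDerivAt_congr' ((hNX x y).div (hQX x y) (Qpos x y).ne')
    (fun t => by simp only [psi2, Nf, Pi.div_apply]) rfl

lemma hpsiY (x y : ℝ) : HasDerivAt (fun t => psi2 (x, t)) (DY x y) y := by
  exact hasDerivAt_congr' ((hNY x y).div (hQY x y) (Qpos x y).ne')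
    (fun t => by simp only [psi2, Nf, Pi.div_apply]) rfl

lemma hDX2 (x y : ℝ) : HasDerivAt (fun t => DX t y) (DXX x y) x := by
  have hA : HasDerivAt (fun t => NXd t y * Qpoly (t, y) - Nf t y * QXd t y)
      (6 * Qpoly (x,y) + NXd x y * QXd x y - (NXd x y * QXd x y + Nf x y * QXXd x y)) x :=
    ((hNXd x y).mul (hQX x y)).sub ((hNX x y).mul (hQXd x y))
  have hQ2 : HasDerivAt (fun t => Qpoly (t, y) ^ 2) (2 * Qpoly (x,y) ^ 1 * QXd x y) x := by
    simpa using (hQX x y).fun_pow 2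
  exact hasDerivAt_congr' (hA.div hQ2 (pow_ne_zero 2 (Qpos x y).ne'))
    (fun t => by simp only [DX, Pi.div_apply]) (by simp only [DXX]; ring)

lemma hDY2 (x y : ℝ) : HasDerivAt (fun t => DY x t) (DYY x y) y := by
  have hA : HasDerivAt (fun t => NYd x t * Qpoly (x, t) - Nf x t * QYd x t)
      (-6 * Qpoly (x,y) + NYd x y * QYd x y - (NYd x y * QYd x y + Nf x y * QYYd x y)) y :=
    ((hNYd x y).mul (hQY x y)).sub ((hNY x y).mul (hQYd x y))
  have hQ2 : HasDerivAt (fun t => Qpoly (x, t) ^ 2) (2 * Qpoly (x,y) ^ 1 * QYd x y) y := by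
    simpa using (hQY x y).fun_pow 2
  exact hasDerivAt_congr' (hA.div hQ2 (pow_ne_zero 2 (Qpos x y).ne'))
    (fun t => by simp only [DY, Pi.div_apply]) (by simp only [DYY]; ring)

lemma pdx_psi2 (p : ℝ × ℝ) : pdx psi2 p = DX p.1 p.2 := (hpsiX p.1 p.2).deriv

lemma pdy_psi2 (p : ℝ × ℝ) : pdy psi2 p = DY p.1 p.2 := (hpsiY p.1 p.2).deriv

lemma pdxx_psi2 (p : ℝ × ℝ) : pdx (pdx psi2) p = DXX p.1 p.2 := by
  have h : (fun t => pdx psi2 (t, p.2)) = fun t => DX t p.2 :=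
    funext fun t => pdx_psi2 (t, p.2)
  simp only [pdx] at h ⊢
  rw [h]
  exact (hDX2 p.1 p.2).deriv

lemma pdyy_psi2 (p : ℝ × ℝ) : pdy (pdy psi2) p = DYY p.1 p.2 := by
  have h : (fun t => pdy psi2 (p.1, t)) = fun t => DY p.1 t :=
    funext fun t => pdy_psi2 (p.1, t)
  simp only [pdy] at h ⊢
  rw [h]
  exact (hDY2 p.1 p.2).deriv

theorem psi2_in_kernel :
    ∀ p : ℝ × ℝ, -lap psi2 p + upot p * psi2 p = 0 := by
  rintro ⟨x, y⟩
  have hne : Qpoly (x, y) ≠ 0 := (Qpos x y).ne'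
  rw [lap, pdxx_psi2 (x, y), pdyy_psi2 (x, y)]
  have e3 : upot (x, y) * psi2 (x, y) =
      (-5120 * (1 + 8*x + 2*y + 17*x^2 + 17*y^2) * Nf x y * Qpoly (x, y))
        / Qpoly (x, y) ^ 4 := by
    rw [upot, psi2, div_mul_div_comm,
      div_eq_div_iff (by simpa using mul_ne_zero (pow_ne_zero 2 hne) hne) (pow_ne_zero 4 hne)]
    simp only [Nf]; ring
  rw [e3, DXX, DYY, ← add_div, ← neg_div, ← add_div, div_eq_zero_iff]
  left
  simp only [NXd, NYd, QXd, QYd, QXXd, QYYd, Nf, Qpoly]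
  ring
end

section
/- The function ψ₂(x,y) = (2x + 2y + 3x² + 10xy − 3y²)/Q(x,y), with Q as above, belongs to L²(ℝ²). -/
lemma Qpoly_ge (p : ℝ × ℝ) : (1 + p.1 ^ 2 + p.2 ^ 2) ^ 2 ≤ Qpoly p := by
  obtain ⟨x, y⟩ := p
  simp only [Qpoly]
  nlinarith [sq_nonneg (x - 4*y), sq_nonneg (x^2+y^2), sq_nonneg (2*(x^2+y^2) + (4*x+y)),
    sq_nonneg (4*x+y), sq_nonneg x, sq_nonneg y, sq_nonneg (x^2+y^2 - 1)]

lemma Qpoly_pos (p : ℝ × ℝ) : 0 < Qpoly p := by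
  have := Qpoly_ge p
  nlinarith [sq_nonneg p.1, sq_nonneg p.2]

lemma psi2_cont : Continuous psi2 := by
  apply Continuous.div (by fun_prop) (by unfold Qpoly; fun_prop)
  exact fun p => (Qpoly_pos p).ne'

lemma num_bound (p : ℝ × ℝ) :
    |2 * p.1 + 2 * p.2 + 3 * p.1 ^ 2 + 10 * p.1 * p.2 - 3 * p.2 ^ 2|
      ≤ 15 * (1 + p.1 ^ 2 + p.2 ^ 2) := by
  obtain ⟨x, y⟩ := p
  rw [abs_le]
  constructor <;> nlinarith [sq_nonneg (x+y), sq_nonneg (x-y), sq_nonneg (x+1), sq_nonneg (y+1),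
    sq_nonneg (x-1), sq_nonneg (y-1)]

lemma psi2_abs_le (p : ℝ × ℝ) : |psi2 p| ≤ 15 / (1 + p.1 ^ 2 + p.2 ^ 2) := by
  have h1 : (0:ℝ) < 1 + p.1 ^ 2 + p.2 ^ 2 := by nlinarith [sq_nonneg p.1, sq_nonneg p.2]
  have h2 := Qpoly_ge p
  have h3 := Qpoly_pos p
  rw [psi2, abs_div, abs_of_pos h3]
  calc |2 * p.1 + 2 * p.2 + 3 * p.1 ^ 2 + 10 * p.1 * p.2 - 3 * p.2 ^ 2| / Qpoly p
      ≤ 15 * (1 + p.1 ^ 2 + p.2 ^ 2) / (1 + p.1 ^ 2 + p.2 ^ 2) ^ 2 :=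
        div_le_div₀ (by positivity) (num_bound p) (by positivity) h2
    _ = 15 / (1 + p.1 ^ 2 + p.2 ^ 2) := by field_simp

theorem psi2_memL2 : MeasureTheory.MemLp psi2 2 MeasureTheory.volume := by
  rw [MeasureTheory.memLp_two_iff_integrable_sq psi2_cont.aestronglyMeasurable]
  have hint : MeasureTheory.Integrable (fun p : ℝ × ℝ => 900 * (1 + ‖p‖) ^ (-(4:ℝ)))
      MeasureTheory.volume := by
    apply MeasureTheory.Integrable.const_mul
    apply integrable_one_add_norm
    simp
    norm_num
  apply hint.mono ((psi2_cont.pow 2).aestronglyMeasurable)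
  filter_upwards with p
  have hn : (0:ℝ) ≤ ‖p‖ := norm_nonneg p
  have h1 : (0:ℝ) < 1 + p.1 ^ 2 + p.2 ^ 2 := by nlinarith [sq_nonneg p.1, sq_nonneg p.2]
  have hnp : ‖p‖ ^ 2 ≤ p.1 ^ 2 + p.2 ^ 2 := by
    rw [Prod.norm_def]
    rcases max_cases ‖p.1‖ ‖p.2‖ with ⟨h, _⟩ | ⟨h, _⟩ <;> rw [h] <;>
      simp only [Real.norm_eq_abs, sq_abs] <;> nlinarith [sq_nonneg p.1, sq_nonneg p.2]
  have hsq : (1 + ‖p‖) ^ 2 ≤ 2 * (1 + p.1 ^ 2 + p.2 ^ 2) := by nlinarith [sq_nonneg (‖p‖ - 1)]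
  have h4 : (1 + ‖p‖) ^ 4 ≤ 4 * (1 + p.1 ^ 2 + p.2 ^ 2) ^ 2 := by nlinarith [sq_nonneg (1 + ‖p‖)]
  have hpos4 : (0:ℝ) < (1 + ‖p‖) ^ 4 := by positivity
  have hb := psi2_abs_le p
  have hb2 : psi2 p ^ 2 ≤ 225 / (1 + p.1 ^ 2 + p.2 ^ 2) ^ 2 := by
    have := abs_nonneg (psi2 p)
    calc psi2 p ^ 2 = |psi2 p| ^ 2 := (sq_abs _).symm
      _ ≤ (15 / (1 + p.1 ^ 2 + p.2 ^ 2)) ^ 2 := by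
          apply pow_le_pow_left₀ this hb
      _ = 225 / (1 + p.1 ^ 2 + p.2 ^ 2) ^ 2 := by rw [div_pow]; norm_num
  have hrw : (1 + ‖p‖) ^ (-(4:ℝ)) = ((1 + ‖p‖) ^ (4:ℕ))⁻¹ := by
    rw [Real.rpow_neg (by positivity), ← Real.rpow_natCast (1 + ‖p‖) 4]
    norm_num
  rw [Real.norm_eq_abs, Real.norm_eq_abs, abs_of_nonneg (sq_nonneg _), hrw,
    abs_of_nonneg (by positivity : (0:ℝ) ≤ 900 * ((1 + ‖p‖) ^ (4:ℕ))⁻¹)]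
  calc psi2 p ^ 2 ≤ 225 / (1 + p.1 ^ 2 + p.2 ^ 2) ^ 2 := hb2
    _ ≤ 900 * ((1 + ‖p‖) ^ (4:ℕ))⁻¹ := by
        rw [show (900:ℝ) * ((1 + ‖p‖) ^ (4:ℕ))⁻¹ = 900 / (1 + ‖p‖) ^ (4:ℕ) by ring, div_le_div_iff₀ (by positivity) hpos4]
        nlinarith [h4, sq_nonneg (1 + p.1 ^ 2 + p.2 ^ 2)]
end
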